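/- Let c > 0 and let x* ∈ (0, 1/c) satisfy e^{4cx*}(1/c − x*) = 1/c + x*. Define f(x) = (1/2) e^{cx*}(x* − 1/c) e^{−cx} + (1/2) e^{−cx*}(x* + 1/c) e^{cx}. Then f(x) > 0 for every x > −x*, f is strictly convex on [−x*, ∞), and f(x) > x for every x ∈ (−x*, x*). -/

import Mathlib

open Real

/-- The candidate equilibrium value function
`f(x) = (1/2)e^{cx*}(x* − 1/c)e^{−cx} + (1/2)e^{−cx*}(x* + 1/c)e^{cx}` is positive
for `x > −x*`, strictly convex on `[−x*, ∞)`, and strictly dominates the reward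
`x` on the continuation region `(−x*, x*)`. -/
theorem stmt_7 (c xs : ℝ) (hc : 0 < c) (hxs : xs ∈ Set.Ioo 0 (1/c))
    (heq : Real.exp (4 * c * xs) * (1/c - xs) = 1/c + xs)
    (f : ℝ → ℝ)
    (hf : ∀ x : ℝ, f x = (1/2) * Real.exp (c * xs) * (xs - 1/c) * Real.exp (-(c * x))
      + (1/2) * Real.exp (-(c * xs)) * (xs + 1/c) * Real.exp (c * x)) :
    (∀ x : ℝ, -xs < x → 0 < f x) ∧
    StrictConvexOn ℝ (Set.Ici (-xs)) f ∧
    (∀ x ∈ Set.Ioo (-xs) xs, x < f x) := by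
  obtain ⟨hxs0, hxsc⟩ := hxs
  have hc0 : c ≠ 0 := ne_of_gt hc
  have hc1 : 0 < 1/c := by positivity
  have key : xs + 1/c = Real.exp (4*c*xs) * (1/c - xs) := by
    rw [show (4:ℝ)*c*xs = 4*c*xs from rfl]
    have : Real.exp (4 * c * xs) * (1/c - xs) = 1/c + xs := heq
    linarith
  have hBpos : 0 < (1/2) * Real.exp (-(c*xs)) * (xs + 1/c) := by
    have h1 : 0 < xs + 1/c := by linarith
    positivity
  -- key coefficient identity
  have e1 : Real.exp (-(c*xs)) * Real.exp (4*c*xs) * Real.exp (-(2*c*xs)) = Real.exp (c*xs) := by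
    rw [← Real.exp_add, ← Real.exp_add]; ring_nf
  have hAB : (1/2) * Real.exp (c * xs) * (xs - 1/c)
      = -(((1/2) * Real.exp (-(c*xs)) * (xs + 1/c)) * Real.exp (-(2*c*xs))) := by
    rw [key]
    linear_combination ((1/2) * (1/c - xs)) * e1
  -- positivity
  have hpos : ∀ x : ℝ, -xs < x → 0 < f x := by
    intro x hx
    have hfx : f x = ((1/2) * Real.exp (-(c*xs)) * (xs + 1/c)) *
        (Real.exp (c*x) - Real.exp (-(2*c*xs)) * Real.exp (-(c*x))) := by
      rw [hf]
      linear_combination (Real.exp (-(c*x))) * hAB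
    have e3 : Real.exp (c*x) * Real.exp (-(c*x)) = 1 := by rw [← Real.exp_add]; simp
    have h1 : Real.exp (-(2*c*xs)) < Real.exp (c*x) * Real.exp (c*x) := by
      rw [← Real.exp_add]
      exact Real.exp_lt_exp.2 (by nlinarith)
    have h2 : Real.exp (-(2*c*xs)) * Real.exp (-(c*x)) < Real.exp (c*x) := by
      nlinarith [Real.exp_pos (-(c*x)), Real.exp_pos (c*x)]
    rw [hfx]
    exact mul_pos hBpos (by linarith)
  -- derivative setup
  set F1 : ℝ → ℝ := fun x =>
    ((1/2) * Real.exp (c*xs) * (xs - 1/c)) * (-c * Real.exp (-(c*x)))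
      + ((1/2) * Real.exp (-(c*xs)) * (xs + 1/c)) * (c * Real.exp (c*x)) with hF1def
  have hder : ∀ x : ℝ, HasDerivAt f (F1 x) x := by
    intro x
    have h1 : HasDerivAt (fun y : ℝ => c * y) c x := by
      simpa using (hasDerivAt_id x).const_mul c
    have h2 : HasDerivAt (fun y : ℝ => Real.exp (c*y)) (c * Real.exp (c*x)) x := by
      simpa [mul_comm] using h1.exp
    have h3 : HasDerivAt (fun y : ℝ => Real.exp (-(c*y))) (-c * Real.exp (-(c*x))) x := by
      simpa [mul_comm] using h1.neg.exp
    have h4 := (h3.const_mul ((1/2) * Real.exp (c*xs) * (xs - 1/c))).add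
      (h2.const_mul ((1/2) * Real.exp (-(c*xs)) * (xs + 1/c)))
    have hfe : f = fun y => ((1/2) * Real.exp (c*xs) * (xs - 1/c)) * Real.exp (-(c*y))
        + ((1/2) * Real.exp (-(c*xs)) * (xs + 1/c)) * Real.exp (c*y) := funext hf
    rw [hfe, hF1def]
    exact h4
  have hder2 : ∀ x : ℝ, HasDerivAt F1 (c^2 * f x) x := by
    intro x
    have h1 : HasDerivAt (fun y : ℝ => c * y) c x := by
      simpa using (hasDerivAt_id x).const_mul c
    have h2 : HasDerivAt (fun y : ℝ => Real.exp (c*y)) (c * Real.exp (c*x)) x := by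
      simpa [mul_comm] using h1.exp
    have h3 : HasDerivAt (fun y : ℝ => Real.exp (-(c*y))) (-c * Real.exp (-(c*x))) x := by
      simpa [mul_comm] using h1.neg.exp
    have h4 := ((h3.const_mul c).const_mul (-((1/2) * Real.exp (c*xs) * (xs - 1/c)))).add
      ((h2.const_mul c).const_mul ((1/2) * Real.exp (-(c*xs)) * (xs + 1/c)))
    have hF1e : F1 = fun y => (-((1/2) * Real.exp (c*xs) * (xs - 1/c))) * (c * Real.exp (-(c*y)))
        + ((1/2) * Real.exp (-(c*xs)) * (xs + 1/c)) * (c * Real.exp (c*y)) := by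
      funext y; rw [hF1def]; ring
    rw [hF1e]
    refine h4.congr_deriv ?_
    rw [hf]; ring
  have hderiv_f : deriv f = F1 := funext fun x => (hder x).deriv
  have hconv : StrictConvexOn ℝ (Set.Ici (-xs)) f := by
    apply strictConvexOn_of_deriv2_pos (convex_Ici _)
      (fun x _ => (hder x).continuousAt.continuousWithinAt)
    intro x hx
    rw [interior_Ici] at hx
    have h2 : deriv (deriv f) x = c^2 * f x := by
      rw [hderiv_f]; exact (hder2 x).deriv
    have : (deriv^[2] f) x = deriv (deriv f) x := by
      simp [Function.iterate_succ_apply]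
    rw [this, h2]
    exact mul_pos (by positivity) (hpos x hx)
  -- value and derivative at xs
  have e3 : Real.exp (c*xs) * Real.exp (-(c*xs)) = 1 := by rw [← Real.exp_add]; simp
  have hd : c * (1/c) = 1 := by field_simp
  have hF1xs : F1 xs = 1 := by
    rw [hF1def]
    linear_combination (c * (1/c)) * e3 + hd
  have hfxs : f xs = xs := by
    rw [hf]
    linear_combination xs * e3
  have hmono : StrictMonoOn F1 (Set.Ici (-xs)) := by
    apply strictMonoOn_of_deriv_pos (convex_Ici _)
      (fun x _ => (hder2 x).continuousAt.continuousWithinAt)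
    intro x hx
    rw [interior_Ici] at hx
    rw [(hder2 x).deriv]
    exact mul_pos (by positivity) (hpos x hx)
  have hgder : ∀ x : ℝ, HasDerivAt (fun y => f y - y) (F1 x - 1) x :=
    fun x => (hder x).sub (hasDerivAt_id x)
  have hanti : StrictAntiOn (fun y => f y - y) (Set.Icc (-xs) xs) := by
    apply strictAntiOn_of_deriv_neg (convex_Icc _ _)
      (fun x _ => (hgder x).continuousAt.continuousWithinAt)
    intro y hy
    rw [interior_Icc] at hy
    rw [(hgder y).deriv]
    have hlt : F1 y < F1 xs :=
      hmono (Set.mem_Ici.2 hy.1.le) (Set.mem_Ici.2 (by linarith)) hy.2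
    rw [hF1xs] at hlt
    linarith
  refine ⟨hpos, hconv, ?_⟩
  intro x hx
  have h := hanti ⟨hx.1.le, hx.2.le⟩ ⟨by linarith [hx.1, hxs0], le_refl xs⟩ hx.2
  simp only at h
  rw [hfxs] at h
  linarith
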